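/- If M, J, K, D > 0 are scalars and −1 < K_F < J/M, then with K_G = 0 the closed-loop system M q̈ = K_e(φ−q) + D_e(φ̇−q̇) + τ_e, J_e φ̈ = −K_e(φ−q) − D_e(φ̇−q̇) (with J_e, K_e, D_e defined by J_e = (J−K_F M)/(K_F+1), K_e = (K/J)(J−K_F M), D_e = (D/J)(J−K_F M)) is passive from τ_e to q̇ with storage function H = ½Mq̇² + ½J_eφ̇² + ½K_e(φ−q)²: Ḣ ≤ q̇ τ_e. -/

import Mathlib

/-- Scalar classical impedance control (K_G = 0, force feedback τ = K_F τₑ):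
if −1 < K_F < J/M then the shaped closed loop is passive from τₑ to q̇ with
storage function H = ½Mq̇² + ½Jₑφ̇² + ½Kₑ(φ−q)². -/
theorem scalar_force_feedback_passive
    (M J K D KF : ℝ) (hM : 0 < M) (hJ : 0 < J) (hK : 0 < K) (hD : 0 < D)
    (hKF : -1 < KF ∧ KF < J / M)
    (τe : ℝ → ℝ)
    (q φ dq dφ ddq ddφ : ℝ → ℝ)
    (hq : ∀ t, HasDerivAt q (dq t) t) (hdq : ∀ t, HasDerivAt dq (ddq t) t)
    (hφ : ∀ t, HasDerivAt φ (dφ t) t) (hdφ : ∀ t, HasDerivAt dφ (ddφ t) t) :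
    (let Je := (J - KF * M) / (KF + 1)
     let Ke := (K / J) * (J - KF * M)
     let De := (D / J) * (J - KF * M)
     (∀ t, M * ddq t = Ke * (φ t - q t) + De * (dφ t - dq t) + τe t) →
     (∀ t, Je * ddφ t = -(Ke * (φ t - q t)) - De * (dφ t - dq t)) →
     ∀ t, ∃ h', HasDerivAt
       (fun t => (1/2) * M * (dq t) ^ 2 + (1/2) * Je * (dφ t) ^ 2
         + (1/2) * Ke * (φ t - q t) ^ 2) h' t ∧
       h' ≤ dq t * τe t) := by
  intro Je Ke De h1 h2 t
  have hJM : 0 < J - KF * M := by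
    have := (lt_div_iff₀ hM).mp hKF.2
    linarith
  have hDe : 0 < De := by
    have : 0 < D / J := div_pos hD hJ
    exact mul_pos this hJM
  have hderiv : HasDerivAt
      (fun t => (1/2) * M * (dq t) ^ 2 + (1/2) * Je * (dφ t) ^ 2
        + (1/2) * Ke * (φ t - q t) ^ 2)
      ((1/2) * M * (2 * dq t * ddq t) + (1/2) * Je * (2 * dφ t * ddφ t)
        + (1/2) * Ke * (2 * (φ t - q t) * (dφ t - dq t))) t := by
    have h1' := ((hdq t).pow 2).const_mul ((1/2) * M)
    have h2' := ((hdφ t).pow 2).const_mul ((1/2) * Je)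
    have h3' := ((((hφ t).sub (hq t))).pow 2).const_mul ((1/2) * Ke)
    have := (h1'.add h2').add h3'
    refine this.congr_deriv ?_
    simp only [Pi.sub_apply, Nat.cast_ofNat, Nat.reduceSub, pow_one]
  refine ⟨_, hderiv, ?_⟩
  have e1 := h1 t
  have e2 := h2 t
  have key : (1/2) * M * (2 * dq t * ddq t) + (1/2) * Je * (2 * dφ t * ddφ t)
      + (1/2) * Ke * (2 * (φ t - q t) * (dφ t - dq t))
      = dq t * τe t - De * (dφ t - dq t) ^ 2 := by
    linear_combination dq t * e1 + dφ t * e2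
  have : 0 ≤ De * (dφ t - dq t) ^ 2 := mul_nonneg hDe.le (sq_nonneg _)
  linarith
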